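/- Let (α₀, β₀, γ₀) ∈ (0,π)³ with α₀ + β₀ + γ₀ = π, let (αⱼ, βⱼ, γⱼ) = Tʲ(α₀, β₀, γ₀), and set fⱼ = 1 / (sin(αⱼ/2) · sin(βⱼ/2) · sin(γⱼ/2)). Then the sequence (fⱼ) converges to 2³ = 8 as j → ∞. -/

import Mathlib

open Real Filter

/-- The angle-bisector-perpendicular triangle transformation on angle triples. -/
noncomputable def T (p : ℝ × ℝ × ℝ) : ℝ × ℝ × ℝ :=
  ((p.2.1 + p.2.2) / 2, (p.1 + p.2.2) / 2, (p.1 + p.2.1) / 2)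

theorem scaling_factor_tendsto_eight (α₀ β₀ γ₀ : ℝ)
    (hα : α₀ ∈ Set.Ioo 0 π) (hβ : β₀ ∈ Set.Ioo 0 π) (hγ : γ₀ ∈ Set.Ioo 0 π)
    (hsum : α₀ + β₀ + γ₀ = π) :
    Tendsto
      (fun j : ℕ =>
        1 / (sin ((T^[j] (α₀, β₀, γ₀)).1 / 2) *
             sin ((T^[j] (α₀, β₀, γ₀)).2.1 / 2) *
             sin ((T^[j] (α₀, β₀, γ₀)).2.2 / 2)))
      atTop (nhds 8) := by
  have hbc : β₀ - π/3 + (γ₀ - π/3) = -(α₀ - π/3) := by linarith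
  have hac : α₀ - π/3 + (γ₀ - π/3) = -(β₀ - π/3) := by linarith
  have hab : α₀ - π/3 + (β₀ - π/3) = -(γ₀ - π/3) := by linarith
  have key : ∀ j : ℕ, T^[j] (α₀, β₀, γ₀) =
      (π/3 + (-1/2:ℝ)^j * (α₀ - π/3), π/3 + (-1/2:ℝ)^j * (β₀ - π/3),
        π/3 + (-1/2:ℝ)^j * (γ₀ - π/3)) := by
    intro j
    induction j with
    | zero => simp
    | succ n ih =>
      rw [Function.iterate_succ_apply', ih]
      simp only [T, Prod.mk.injEq]
      refine ⟨?_, ?_, ?_⟩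
      · linear_combination ((-1/2:ℝ)^n / 2) * hbc
      · linear_combination ((-1/2:ℝ)^n / 2) * hac
      · linear_combination ((-1/2:ℝ)^n / 2) * hab
  have hr : Tendsto (fun j : ℕ => ((-1/2:ℝ)^j)) atTop (nhds 0) := by
    apply tendsto_pow_atTop_nhds_zero_of_abs_lt_one
    rw [abs_lt]; constructor <;> norm_num
  have hsin : ∀ c : ℝ, Tendsto (fun j : ℕ => sin ((π/3 + (-1/2:ℝ)^j * c) / 2))
      atTop (nhds (1/2)) := by
    intro c
    have h1 : Tendsto (fun j : ℕ => (π/3 + (-1/2:ℝ)^j * c) / 2) atTop (nhds (π/6)) := by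
      have := ((hr.mul_const c).const_add (π/3)).div_const 2
      have h6 : (π/3 : ℝ)/2 = π/6 := by ring
      rw [← h6]
      simpa using this
    have h2 := (Real.continuous_sin.continuousAt (x := π/6)).tendsto.comp h1
    simpa [Real.sin_pi_div_six, Function.comp_def] using h2
  have hprod : Tendsto (fun j : ℕ =>
      sin ((T^[j] (α₀, β₀, γ₀)).1 / 2) * sin ((T^[j] (α₀, β₀, γ₀)).2.1 / 2) *
        sin ((T^[j] (α₀, β₀, γ₀)).2.2 / 2)) atTop (nhds (1/8)) := by
    have := ((hsin (α₀ - π/3)).mul (hsin (β₀ - π/3))).mul (hsin (γ₀ - π/3))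
    have heq : (fun j : ℕ =>
        sin ((T^[j] (α₀, β₀, γ₀)).1 / 2) * sin ((T^[j] (α₀, β₀, γ₀)).2.1 / 2) *
          sin ((T^[j] (α₀, β₀, γ₀)).2.2 / 2)) =
        (fun j : ℕ => sin ((π/3 + (-1/2:ℝ)^j * (α₀ - π/3)) / 2) *
          sin ((π/3 + (-1/2:ℝ)^j * (β₀ - π/3)) / 2) *
          sin ((π/3 + (-1/2:ℝ)^j * (γ₀ - π/3)) / 2)) := by
      funext j; rw [key j]
    rw [heq]
    convert this using 2
    norm_num
  have h8 : Tendsto (fun j : ℕ =>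
      1 / (sin ((T^[j] (α₀, β₀, γ₀)).1 / 2) * sin ((T^[j] (α₀, β₀, γ₀)).2.1 / 2) *
        sin ((T^[j] (α₀, β₀, γ₀)).2.2 / 2))) atTop (nhds (1 / (1/8))) :=
    (tendsto_const_nhds).div hprod (by norm_num)
  convert h8 using 2
  norm_num
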